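/- Suppose q, p, u, q̃, p̃, ũ, r : ℝ → M_m(ℝ) are differentiable (q and q̃ twice differentiable) and satisfy: (i) Dq = p − q·Θ·u + [τ, q]; (ii) Dp = Ξ·q + q·Θ·q̃·q + (Dq)·Θ·u − 2·[τ, r]·q − [τ, Dq]; (iii) Du = −q̃·q; (iv) D(q̃ᵗ) = p̃ᵗ − q̃ᵗ·Θ·ũ + [−τ, q̃ᵗ]; (v) D(p̃ᵗ) = Ξ·q̃ᵗ + q̃ᵗ·Θ·qᵗ·q̃ᵗ + (D(q̃ᵗ))·Θ·ũ − 2·[−τ, rᵗ]·q̃ᵗ − [−τ, D(q̃ᵗ)]; (vi) Dũ = −qᵗ·q̃ᵗ; (vii) Dr = −q·Θ·q̃ + [τ, r]. Then the triple (q, q̃, r) satisfies the full system D²q = Ξ·q + 2·q·Θ·q̃·q − 2·[τ, r]·q, D²q̃ = q̃·Ξ + 2·q̃·q·Θ·q̃ − 2·q̃·[τ, r], and Dr = −q·Θ·q̃ + [τ, r] (equations (1), (2), (3) characterizing the finite-dimensional distributions of the Airy process). -/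

import Mathlib

open Matrix

attribute [local instance] Matrix.normedAddCommGroup Matrix.normedSpace
variable {m : ℕ}

noncomputable def mulCLM (m : ℕ) :
    Matrix (Fin m) (Fin m) ℝ →L[ℝ] Matrix (Fin m) (Fin m) ℝ →L[ℝ] Matrix (Fin m) (Fin m) ℝ :=
  LinearMap.toContinuousLinearMap
    { toFun := fun a => LinearMap.toContinuousLinearMap (LinearMap.mul ℝ _ a)
      map_add' := by intro a b; ext c; simp [add_mul]
      map_smul' := by intro s a; ext c; simp [smul_mul_assoc] }

@[simp] lemma mulCLM_apply (a b : Matrix (Fin m) (Fin m) ℝ) : mulCLM m a b = a * b := rfl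

noncomputable def tCLM (m : ℕ) : Matrix (Fin m) (Fin m) ℝ →L[ℝ] Matrix (Fin m) (Fin m) ℝ :=
  LinearMap.toContinuousLinearMap (Matrix.transposeLinearEquiv (Fin m) (Fin m) ℝ ℝ).toLinearMap

@[simp] lemma tCLM_apply (a : Matrix (Fin m) (Fin m) ℝ) : tCLM m a = aᵀ := rfl

lemma hasDerivAt_matmul {f g : ℝ → Matrix (Fin m) (Fin m) ℝ} {f' g' : Matrix (Fin m) (Fin m) ℝ}
    {x : ℝ} (hf : HasDerivAt f f' x) (hg : HasDerivAt g g' x) :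
    HasDerivAt (fun t => f t * g t) (f' * g x + f x * g') x := by
  have h1 := (mulCLM m).hasDerivAt_of_bilinear (fun _ => hf) (fun _ => hg)
  rw [add_comm]
  exact h1

lemma hasDerivAt_transpose {f : ℝ → Matrix (Fin m) (Fin m) ℝ} {f' : Matrix (Fin m) (Fin m) ℝ}
    {x : ℝ} (hf : HasDerivAt f f' x) :
    HasDerivAt (fun t => (f t)ᵀ) f'ᵀ x := by
  have := ((tCLM m).hasFDerivAt (x := f x)).comp_hasDerivAt x hf
  exact this

lemma airy_core (Ξ Q P U Qt R : ℝ → Matrix (Fin m) (Fin m) ℝ)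
    (τ Θ : Matrix (Fin m) (Fin m) ℝ)
    (hQ : Differentiable ℝ Q) (hP : Differentiable ℝ P) (hU : Differentiable ℝ U)
    (e1 : ∀ x, deriv Q x = P x - Q x * Θ * U x + ⁅τ, Q x⁆)
    (e2 : ∀ x, deriv P x = Ξ x * Q x + Q x * Θ * Qt x * Q x + deriv Q x * Θ * U x
        - (2 : ℝ) • (⁅τ, R x⁆ * Q x) - ⁅τ, deriv Q x⁆)
    (e3 : ∀ x, deriv U x = -(Qt x * Q x)) :
    ∀ x, deriv (deriv Q) x =
      Ξ x * Q x + (2 : ℝ) • (Q x * Θ * Qt x * Q x) - (2 : ℝ) • (⁅τ, R x⁆ * Q x) := by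
  intro x
  have hQd := (hQ x).hasDerivAt
  have hPd := (hP x).hasDerivAt
  have hUd := (hU x).hasDerivAt
  have key : deriv (deriv Q) x =
      deriv P x - (deriv Q x * Θ * U x + Q x * Θ * deriv U x) + ⁅τ, deriv Q x⁆ := by
    have h2 : HasDerivAt (fun t => Q t * Θ * U t)
        (deriv Q x * Θ * U x + Q x * Θ * deriv U x) x := by
      have hc : HasDerivAt (fun _ => Θ) (0 : Matrix (Fin m) (Fin m) ℝ) x := hasDerivAt_const x Θ
      have := hasDerivAt_matmul (hasDerivAt_matmul hQd hc) hUd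
      simp only [mul_zero, add_zero] at this
      exact this
    have h3 : HasDerivAt (fun t => ⁅τ, Q t⁆) ⁅τ, deriv Q x⁆ x := by
      simp only [Ring.lie_def]
      have hc : HasDerivAt (fun _ => τ) (0 : Matrix (Fin m) (Fin m) ℝ) x := hasDerivAt_const x τ
      have := (hasDerivAt_matmul hc hQd).sub (hasDerivAt_matmul hQd hc)
      simp only [zero_mul, mul_zero, zero_add, add_zero] at this
      exact this
    have heq : deriv Q = fun t => P t - Q t * Θ * U t + ⁅τ, Q t⁆ := funext e1
    conv_lhs => rw [heq]
    exact ((hPd.sub h2).add h3).deriv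
  rw [key, e2 x, e3 x]
  simp only [Ring.lie_def, two_smul ℝ]
  noncomm_ring

/-- The full system (equations (1), (2), (3)) characterizing the
finite-dimensional distributions of the Airy process follows from the
first-order equations (i)–(vii) for `q, p, u, q̃, p̃, ũ, r`. -/
theorem airy_system_full
    (m : ℕ) (hm : 1 ≤ m)
    (τ Θ : Matrix (Fin m) (Fin m) ℝ)
    (hτ : τ.IsDiag) (hΘ : ∀ i j, Θ i j = 1)
    (Ξ q p u qt pt ut r : ℝ → Matrix (Fin m) (Fin m) ℝ)
    (hΞdiff : Differentiable ℝ Ξ) (hΞdiag : ∀ x, (Ξ x).IsDiag)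
    (hq : Differentiable ℝ q) (hq' : Differentiable ℝ (deriv q))
    (hp : Differentiable ℝ p) (hu : Differentiable ℝ u)
    (hqt : Differentiable ℝ qt) (hqt' : Differentiable ℝ (deriv qt))
    (hpt : Differentiable ℝ pt) (hut : Differentiable ℝ ut)
    (hr : Differentiable ℝ r)
    -- (i)
    (eq1 : ∀ x, deriv q x = p x - q x * Θ * u x + ⁅τ, q x⁆)
    -- (ii)
    (eq2 : ∀ x, deriv p x =
      Ξ x * q x + q x * Θ * qt x * q x + deriv q x * Θ * u x
        - (2 : ℝ) • (⁅τ, r x⁆ * q x) - ⁅τ, deriv q x⁆)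
    -- (iii)
    (eq3 : ∀ x, deriv u x = -(qt x * q x))
    -- (iv)
    (eq4 : ∀ x, deriv (fun t => (qt t)ᵀ) x =
      (pt x)ᵀ - (qt x)ᵀ * Θ * ut x + ⁅-τ, (qt x)ᵀ⁆)
    -- (v)
    (eq5 : ∀ x, deriv (fun t => (pt t)ᵀ) x =
      Ξ x * (qt x)ᵀ + (qt x)ᵀ * Θ * (q x)ᵀ * (qt x)ᵀ
        + deriv (fun t => (qt t)ᵀ) x * Θ * ut x
        - (2 : ℝ) • (⁅-τ, (r x)ᵀ⁆ * (qt x)ᵀ) - ⁅-τ, deriv (fun t => (qt t)ᵀ) x⁆)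
    -- (vi)
    (eq6 : ∀ x, deriv ut x = -((q x)ᵀ * (qt x)ᵀ))
    -- (vii)
    (eq7 : ∀ x, deriv r x = -(q x * Θ * qt x) + ⁅τ, r x⁆) :
    (∀ x, deriv (deriv q) x =
        Ξ x * q x + (2 : ℝ) • (q x * Θ * qt x * q x) - (2 : ℝ) • (⁅τ, r x⁆ * q x)) ∧
    (∀ x, deriv (deriv qt) x =
        qt x * Ξ x + (2 : ℝ) • (qt x * q x * Θ * qt x) - (2 : ℝ) • (qt x * ⁅τ, r x⁆)) ∧
    (∀ x, deriv r x = -(q x * Θ * qt x) + ⁅τ, r x⁆) := by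
  have hτ' : τᵀ = τ := hτ.isSymm
  have hΘ' : Θᵀ = Θ := by ext i j; simp [Matrix.transpose_apply, hΘ]
  have hΞ' : ∀ x, (Ξ x)ᵀ = Ξ x := fun x => (hΞdiag x).isSymm
  refine ⟨airy_core Ξ q p u qt r τ Θ hq hp hu eq1 eq2 eq3, ?_, eq7⟩
  have hqtT : Differentiable ℝ (fun t => (qt t)ᵀ) :=
    fun x => (hasDerivAt_transpose (hqt x).hasDerivAt).differentiableAt
  have hptT : Differentiable ℝ (fun t => (pt t)ᵀ) :=
    fun x => (hasDerivAt_transpose (hpt x).hasDerivAt).differentiableAt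
  have core2 := airy_core Ξ (fun t => (qt t)ᵀ) (fun t => (pt t)ᵀ) ut (fun t => (q t)ᵀ)
    (fun t => (r t)ᵀ) (-τ) Θ hqtT hptT hut eq4 eq5 eq6
  have hder : deriv (fun t => (qt t)ᵀ) = fun t => (deriv qt t)ᵀ := by
    funext t; exact (hasDerivAt_transpose (hqt t).hasDerivAt).deriv
  intro x
  have h2 : (deriv (deriv qt) x)ᵀ = deriv (deriv (fun t => (qt t)ᵀ)) x := by
    rw [hder]
    exact ((hasDerivAt_transpose (hqt' x).hasDerivAt).deriv).symm
  have h3 : deriv (deriv qt) x = (deriv (deriv (fun t => (qt t)ᵀ)) x)ᵀ := by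
    rw [← h2, Matrix.transpose_transpose]
  rw [h3, core2 x]
  simp only [Ring.lie_def, two_smul ℝ, Matrix.transpose_add, Matrix.transpose_sub,
    Matrix.transpose_mul, Matrix.transpose_neg, Matrix.transpose_transpose, hτ', hΘ', hΞ']
  noncomm_ring
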